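/- There exists a convex compact set C ⊆ ℝ² containing 0 and a map f : C → C that is 1-Lipschitz for the ℓ¹ norm such that the family (y_λ) of unique fixed points of x ↦ λ f(x), λ ∈ (0,1), does not converge as λ → 1. -/

import Mathlib

open Set Filter Real Topology

noncomputable def Gf (w : ℝ) : ℝ := max w 0 * Real.sin (Real.log w) / 4

lemma Gf_nonpos {w : ℝ} (hw : w ≤ 0) : Gf w = 0 := by
  simp [Gf, max_eq_right hw]

lemma Gf_pos {w : ℝ} (hw : 0 < w) : Gf w = w * Real.sin (Real.log w) / 4 := by
  simp [Gf, max_eq_left hw.le]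

lemma Gf_hasDeriv {w : ℝ} (hw : 0 < w) :
    HasDerivAt Gf ((Real.sin (Real.log w) + Real.cos (Real.log w)) / 4) w := by
  have h1 : HasDerivAt Real.log w⁻¹ w := Real.hasDerivAt_log hw.ne'
  have h2 : HasDerivAt (fun x => Real.sin (Real.log x)) (Real.cos (Real.log w) * w⁻¹) w :=
    (Real.hasDerivAt_sin _).comp w h1
  have h3 := ((hasDerivAt_id w).mul h2).div_const 4
  have heq : (fun x => x * Real.sin (Real.log x) / 4) =ᶠ[nhds w] Gf := by
    filter_upwards [Ioi_mem_nhds hw] with y hy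
    rw [Gf_pos hy]
  have h4 := h3.congr_of_eventuallyEq heq.symm
  convert h4 using 1
  · rfl
  · rfl
  · rw [id_eq, mul_comm (Real.cos _), ← mul_assoc, mul_inv_cancel₀ hw.ne', one_mul, one_mul]

lemma Gf_lip (w w' : ℝ) : |Gf w - Gf w'| ≤ |w - w'| / 2 := by
  have key : ∀ a b : ℝ, 0 < a → 0 < b → |Gf a - Gf b| ≤ |a - b| / 2 := by
    intro a b ha hb
    have := Convex.norm_image_sub_le_of_norm_hasDerivWithin_le
      (f := Gf) (f' := fun x => (Real.sin (Real.log x) + Real.cos (Real.log x)) / 4)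
      (s := Ioi (0:ℝ)) (C := 1/2)
      (fun x hx => (Gf_hasDeriv hx).hasDerivWithinAt)
      (fun x _ => by
        rw [Real.norm_eq_abs]
        have := abs_sin_le_one (Real.log x)
        have := abs_cos_le_one (Real.log x)
        rw [abs_div]
        rw [div_le_iff₀ (by norm_num)]
        calc |Real.sin (Real.log x) + Real.cos (Real.log x)| ≤ _ := abs_add_le _ _
          _ ≤ 1/2 * |(4:ℝ)| := by rw [abs_of_pos (by norm_num : (0:ℝ) < 4)]; linarith)
      (convex_Ioi 0) hb ha
    rw [Real.norm_eq_abs, Real.norm_eq_abs] at this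
    linarith
  have bound : ∀ a : ℝ, 0 < a → |Gf a| ≤ a / 4 := by
    intro a ha
    rw [Gf_pos ha, abs_div, abs_mul, abs_of_pos ha, abs_of_pos (by norm_num : (0:ℝ)<4)]
    have h1 : |Real.sin (Real.log a)| ≤ 1 := abs_sin_le_one (Real.log a)
    calc a * |Real.sin (Real.log a)| / 4 ≤ a * 1 / 4 := by
          apply div_le_div_of_nonneg_right ?_ (by norm_num)
          exact mul_le_mul_of_nonneg_left h1 ha.le
      _ = a / 4 := by ring
  rcases le_or_gt w 0 with hw | hw <;> rcases le_or_gt w' 0 with hw' | hw'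
  · rw [Gf_nonpos hw, Gf_nonpos hw']; simp; positivity
  · rw [Gf_nonpos hw, zero_sub, abs_neg]
    have h1 := bound w' hw'
    rw [abs_sub_comm, abs_of_pos (show (0:ℝ) < w' - w by linarith)]
    linarith
  · rw [Gf_nonpos hw', sub_zero]
    have h1 := bound w hw
    rw [abs_of_pos (show (0:ℝ) < w - w' by linarith)]
    linarith
  · exact key w w' hw hw'

noncomputable def clampR (x : ℝ) : ℝ := max (-1) (min 1 x)

lemma clampR_abs_le (x : ℝ) : |clampR x| ≤ 1 := by
  rw [abs_le]
  exact ⟨le_max_left _ _, max_le (by norm_num) (min_le_left _ _)⟩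

lemma clampR_eq {x : ℝ} (h1 : -1 ≤ x) (h2 : x ≤ 1) : clampR x = x := by
  rw [clampR, min_eq_right h2, max_eq_right h1]

lemma clampR_lip (a b : ℝ) : |clampR a - clampR b| ≤ |a - b| := by
  unfold clampR
  rw [max_comm (-1) (min 1 a), max_comm (-1) (min 1 b)]
  calc |max (min 1 a) (-1) - max (min 1 b) (-1)| ≤ |min 1 a - min 1 b| :=
        abs_max_sub_max_le_abs _ _ _
    _ ≤ max |1 - 1| |a - b| := abs_min_sub_min_le_max _ _ _ _
    _ ≤ |a - b| := by simp

noncomputable def ff (p : WithLp 1 (ℝ × ℝ)) : WithLp 1 (ℝ × ℝ) :=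
  (WithLp.equiv 1 (ℝ × ℝ)).symm (1, clampR (p.snd + Gf (1 - p.fst)))

noncomputable def yy (l : ℝ) : WithLp 1 (ℝ × ℝ) :=
  (WithLp.equiv 1 (ℝ × ℝ)).symm (l, l * Real.sin (Real.log (1 - l)) / 4)

lemma wlp_norm (x : WithLp 1 (ℝ × ℝ)) : ‖x‖ = |x.fst| + |x.snd| := by
  rw [WithLp.prod_norm_eq_add (by norm_num)]
  norm_num [Real.norm_eq_abs]

lemma wlp_dist (x y : WithLp 1 (ℝ × ℝ)) : dist x y = |x.fst - y.fst| + |x.snd - y.snd| := by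
  rw [WithLp.prod_dist_eq_add (by norm_num)]
  norm_num [Real.dist_eq]

lemma ff_fst (p : WithLp 1 (ℝ × ℝ)) : (ff p).fst = 1 := rfl
lemma ff_snd (p : WithLp 1 (ℝ × ℝ)) : (ff p).snd = clampR (p.snd + Gf (1 - p.fst)) := rfl
lemma yy_fst (l : ℝ) : (yy l).fst = l := rfl
lemma yy_snd (l : ℝ) : (yy l).snd = l * Real.sin (Real.log (1 - l)) / 4 := rfl

lemma ff_lip : LipschitzWith 1 ff := by
  rw [lipschitzWith_iff_dist_le_mul]
  intro p q
  rw [wlp_dist, wlp_dist, ff_fst, ff_fst, ff_snd, ff_snd]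
  have hG := Gf_lip (1 - p.fst) (1 - q.fst)
  have h1 : (1 - p.fst) - (1 - q.fst) = -(p.fst - q.fst) := by ring
  rw [h1, abs_neg] at hG
  have hc := clampR_lip (p.snd + Gf (1 - p.fst)) (q.snd + Gf (1 - q.fst))
  have habs : |p.snd + Gf (1 - p.fst) - (q.snd + Gf (1 - q.fst))| ≤
      |p.snd - q.snd| + |Gf (1 - p.fst) - Gf (1 - q.fst)| := by
    calc |p.snd + Gf (1 - p.fst) - (q.snd + Gf (1 - q.fst))|
        = |(p.snd - q.snd) + (Gf (1 - p.fst) - Gf (1 - q.fst))| := by ring_nf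
      _ ≤ _ := abs_add_le _ _
  have h0 : |(1:ℝ) - 1| = 0 := by norm_num
  rw [h0]
  push_cast
  linarith [abs_nonneg (p.fst - q.fst)]

theorem exists_nonconvergent_ylam_l1 :
    ∃ C : Set (WithLp 1 (ℝ × ℝ)), Convex ℝ C ∧ IsCompact C ∧ (0 : WithLp 1 (ℝ × ℝ)) ∈ C ∧
      ∃ f : WithLp 1 (ℝ × ℝ) → WithLp 1 (ℝ × ℝ), MapsTo f C C ∧
        LipschitzOnWith 1 f C ∧
        ∃ y : ℝ → WithLp 1 (ℝ × ℝ),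
          (∀ l ∈ Ioo (0:ℝ) 1, y l ∈ C ∧ l • f (y l) = y l) ∧
          ¬ ∃ L : WithLp 1 (ℝ × ℝ),
            Tendsto y (nhdsWithin 1 (Ioo (0:ℝ) 1)) (nhds L) := by
  refine ⟨Metric.closedBall 0 2, convex_closedBall _ _, isCompact_closedBall _ _,
    Metric.mem_closedBall_self (by norm_num), ff, ?_, ff_lip.lipschitzOnWith, yy, ?_, ?_⟩
  · -- MapsTo
    intro p _
    rw [Metric.mem_closedBall, dist_zero_right, wlp_norm, ff_fst, ff_snd]
    have := clampR_abs_le (p.snd + Gf (1 - p.fst))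
    rw [abs_one]
    linarith
  · -- fixed point property
    intro l hl
    obtain ⟨hl0, hl1⟩ := hl
    have hs : |Real.sin (Real.log (1 - l))| ≤ 1 := abs_sin_le_one _
    rw [abs_le] at hs
    constructor
    · rw [Metric.mem_closedBall, dist_zero_right, wlp_norm, yy_fst, yy_snd,
        abs_of_pos hl0, abs_div, abs_mul, abs_of_pos hl0, abs_of_pos (show (0:ℝ)<4 by norm_num)]
      have : l * |Real.sin (Real.log (1 - l))| ≤ 1 := by
        calc l * |Real.sin (Real.log (1 - l))| ≤ 1 * 1 := by
              apply mul_le_mul hl1.le (abs_sin_le_one _) (abs_nonneg _) zero_le_one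
          _ = 1 := one_mul 1
      linarith
    · -- l • ff (yy l) = yy l
      have hval : (yy l).snd + Gf (1 - (yy l).fst) = Real.sin (Real.log (1 - l)) / 4 := by
        rw [yy_fst, yy_snd, Gf_pos (show (0:ℝ) < 1 - l by linarith)]
        ring
      have hff : ff (yy l) = (WithLp.equiv 1 (ℝ × ℝ)).symm (1, Real.sin (Real.log (1 - l)) / 4) := by
        rw [ff, hval, clampR_eq (by linarith) (by linarith)]
      rw [hff]
      show (WithLp.equiv 1 (ℝ × ℝ)).symm (l • ((1:ℝ), Real.sin (Real.log (1 - l)) / 4)) = _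
      rw [yy]
      congr 1
      rw [Prod.smul_mk, smul_eq_mul, smul_eq_mul, mul_one]
      congr 1
      ring
  · -- non-convergence
    rintro ⟨L, hL⟩
    have hsnd : Continuous (fun x : WithLp 1 (ℝ × ℝ) => x.snd) :=
      continuous_snd.comp (WithLp.prod_continuous_ofLp 1 ℝ ℝ)
    have pi_pos := Real.pi_pos
    -- limit along a sequence with sin = -1 and one with sin = 1
    have key : ∀ c : ℝ, c < 0 → (∀ n : ℕ, Real.sin (c - 2*π*(n+1)) = Real.sin c) →
        L.snd = Real.sin c / 4 := by
      intro c hc hsin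
      set a : ℕ → ℝ := fun n => 1 - Real.exp (c - 2*π*(n+1)) with ha_def
      have ha_mem : ∀ n : ℕ, a n ∈ Ioo (0:ℝ) 1 := by
        intro n
        constructor
        · have : Real.exp (c - 2*π*(n+1)) < 1 := by
            rw [Real.exp_lt_one_iff]
            have : (0:ℝ) ≤ (n:ℝ) := Nat.cast_nonneg n
            nlinarith
          simp only [ha_def]
          linarith
        · have := Real.exp_pos (c - 2*π*(n+1))
          simp only [ha_def]
          linarith
      have hexp_bot : Tendsto (fun n : ℕ => c - 2*π*(n+1)) atTop atBot := by
        have hn : Tendsto (fun n : ℕ => (n:ℝ) + 1) atTop atTop :=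
          tendsto_atTop_add_const_right atTop 1 tendsto_natCast_atTop_atTop
        have hmul : Tendsto (fun n : ℕ => -(2*π) * ((n:ℝ)+1)) atTop atBot :=
          hn.const_mul_atTop_of_neg (by linarith)
        have := tendsto_atBot_add_const_left atTop c hmul
        apply this.congr
        intro n; ring
      have ha_lim : Tendsto a atTop (𝓝 1) := by
        have h0 : Tendsto (fun n : ℕ => Real.exp (c - 2*π*(n+1))) atTop (𝓝 0) :=
          Real.tendsto_exp_atBot.comp hexp_bot
        have := h0.const_sub 1
        simpa using this
      have ha_w : Tendsto a atTop (nhdsWithin 1 (Ioo (0:ℝ) 1)) :=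
        tendsto_nhdsWithin_of_tendsto_nhds_of_eventually_within _ ha_lim
          (Eventually.of_forall ha_mem)
      have hcomp : Tendsto (fun n => (yy (a n)).snd) atTop (𝓝 L.snd) :=
        (hsnd.tendsto L).comp (hL.comp ha_w)
      have hval : ∀ n : ℕ, (yy (a n)).snd = a n * Real.sin c / 4 := by
        intro n
        rw [yy_snd]
        have h1 : 1 - a n = Real.exp (c - 2*π*(n+1)) := by simp [ha_def]
        rw [h1, Real.log_exp, hsin n]
      have hlim2 : Tendsto (fun n : ℕ => a n * Real.sin c / 4) atTop (𝓝 (Real.sin c / 4)) := by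
        have := (ha_lim.mul_const (Real.sin c)).div_const 4
        simpa using this
      exact tendsto_nhds_unique (hcomp.congr hval) hlim2
    have h1 : L.snd = Real.sin (-(π/2)) / 4 := by
      apply key _ (by linarith)
      intro n
      have : -(π/2) - 2*π*((n:ℝ)+1) = -(π/2) + (-(n:ℝ)-1) * (2*π) := by ring
      rw [this]
      have hcast : ((-(n:ℤ)-1 : ℤ) : ℝ) = -(n:ℝ)-1 := by push_cast; ring
      rw [← hcast, Real.sin_add_int_mul_two_pi]
    have h2 : L.snd = Real.sin (-(3*π/2)) / 4 := by
      apply key _ (by linarith)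
      intro n
      have : -(3*π/2) - 2*π*((n:ℝ)+1) = -(3*π/2) + (-(n:ℝ)-1) * (2*π) := by ring
      rw [this]
      have hcast : ((-(n:ℤ)-1 : ℤ) : ℝ) = -(n:ℝ)-1 := by push_cast; ring
      rw [← hcast, Real.sin_add_int_mul_two_pi]
    have hs1 : Real.sin (-(π/2)) = -1 := by
      rw [Real.sin_neg, Real.sin_pi_div_two]
    have hs2 : Real.sin (-(3*π/2)) = 1 := by
      have : -(3*π/2) = π/2 + (-1 : ℤ) * (2*π) := by push_cast; ring
      rw [this, Real.sin_add_int_mul_two_pi, Real.sin_pi_div_two]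
    rw [h1, hs1] at h2
    rw [hs2] at h2
    norm_num at h2
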